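/- Fix vectors α_0,…,α_n in a finite-dimensional real inner product space E, and for each nonzero x ∈ ℂ^{n+1} let β(x) denote the unique point of the convex hull of {α_j : x_j ≠ 0} closest to the origin. For every b ∈ E the set S_b = {x ∈ ℂ^{n+1} \ {0} : β(x) = b} is locally closed in ℂ^{n+1} \ {0}; indeed S_b is an open subset of the closed set {x ∈ ℂ^{n+1} \ {0} : ‖β(x)‖ ≥ ‖b‖}. -/

import Mathlib

/-- Uniqueness of the norm minimizer in a convex set (inner product space). -/
lemma min_norm_unique {E : Type*} [NormedAddCommGroup E] [InnerProductSpace ℝ E]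
    {K : Set E} (hK : Convex ℝ K) {u v : E} (hu : u ∈ K) (hv : v ∈ K)
    (hmu : ∀ y ∈ K, ‖u‖ ≤ ‖y‖) (hmv : ∀ y ∈ K, ‖v‖ ≤ ‖y‖) : u = v := by
  by_contra hne
  have huv : ‖u‖ = ‖v‖ := le_antisymm (hmu v hv) (hmv u hu)
  have hm : (1/2 : ℝ) • u + (1/2 : ℝ) • v ∈ K := by
    apply hK hu hv <;> norm_num
  have h1 : ‖u‖ ≤ ‖(1/2 : ℝ) • u + (1/2 : ℝ) • v‖ := hmu _ hm
  have h2 : ‖(1/2 : ℝ) • u + (1/2 : ℝ) • v‖ = ‖u + v‖ / 2 := by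
    rw [← smul_add, norm_smul]
    simp [abs_of_nonneg]
    ring
  have hpar : ‖u + v‖ * ‖u + v‖ + ‖u - v‖ * ‖u - v‖
      = 2 * (‖u‖ * ‖u‖ + ‖v‖ * ‖v‖) := by
    simpa only [sq] using parallelogram_law_with_norm ℝ u v
  have hsub : 0 < ‖u - v‖ := by
    rw [norm_pos_iff]; exact sub_ne_zero_of_ne hne
  nlinarith [norm_nonneg (u + v), norm_nonneg u]

/-- The set of nonzero vectors whose support contains the support of `x₀` is open. -/
lemma supp_open (n : ℕ) (x₀ : Fin (n + 1) → ℂ) :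
    IsOpen {x : {y : Fin (n + 1) → ℂ // y ≠ 0} | ∀ j, x₀ j ≠ 0 → x.1 j ≠ 0} := by
  have : {x : {y : Fin (n + 1) → ℂ // y ≠ 0} | ∀ j, x₀ j ≠ 0 → x.1 j ≠ 0}
      = ⋂ j, {x : {y : Fin (n + 1) → ℂ // y ≠ 0} | x₀ j ≠ 0 → x.1 j ≠ 0} := by
    ext x; simp
  rw [this]
  refine isOpen_iInter_of_finite fun j => ?_
  by_cases h : x₀ j = 0
  · simp [h]
  · have : {x : {y : Fin (n + 1) → ℂ // y ≠ 0} | x₀ j ≠ 0 → x.1 j ≠ 0}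
        = (fun x : {y : Fin (n + 1) → ℂ // y ≠ 0} => x.1 j) ⁻¹' {z | z ≠ 0} := by
      ext x; simp [h]
    rw [this]
    exact (isOpen_ne).preimage ((continuous_apply j).comp continuous_subtype_val)

/-- Fix vectors α_0,…,α_n in a finite-dimensional real inner product space E, and for each
nonzero x ∈ ℂ^{n+1} let β(x) be the unique point of the convex hull of {α_j : x_j ≠ 0}
closest to the origin. For every b ∈ E the set S_b = {x ≠ 0 : β(x) = b} is locally closed
in ℂ^{n+1} \ {0}; indeed S_b is an open subset of the closed set {x ≠ 0 : ‖β(x)‖ ≥ ‖b‖}. -/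
theorem stmt_6 {E : Type*} [NormedAddCommGroup E] [InnerProductSpace ℝ E]
    [FiniteDimensional ℝ E] (n : ℕ) (α : Fin (n + 1) → E)
    (β : (Fin (n + 1) → ℂ) → E)
    (hβ : ∀ x : Fin (n + 1) → ℂ, x ≠ 0 →
      β x ∈ convexHull ℝ (α '' {j | x j ≠ 0}) ∧
      ∀ y ∈ convexHull ℝ (α '' {j | x j ≠ 0}), ‖β x‖ ≤ ‖y‖)
    (b : E) :
    IsLocallyClosed {x : {y : Fin (n + 1) → ℂ // y ≠ 0} | β x.1 = b} ∧
    IsClosed {x : {y : Fin (n + 1) → ℂ // y ≠ 0} | ‖b‖ ≤ ‖β x.1‖} ∧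
    ∃ U : Set {y : Fin (n + 1) → ℂ // y ≠ 0}, IsOpen U ∧
      {x : {y : Fin (n + 1) → ℂ // y ≠ 0} | β x.1 = b} =
        U ∩ {x : {y : Fin (n + 1) → ℂ // y ≠ 0} | ‖b‖ ≤ ‖β x.1‖} := by
  set X := {y : Fin (n + 1) → ℂ // y ≠ 0}
  -- monotonicity: bigger support ⇒ smaller ‖β‖
  have key : ∀ x x' : X, (∀ j, x.1 j ≠ 0 → x'.1 j ≠ 0) → ‖β x'.1‖ ≤ ‖β x.1‖ := by
    intro x x' hsub
    have hmem : β x.1 ∈ convexHull ℝ (α '' {j | x'.1 j ≠ 0}) := by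
      refine convexHull_mono (Set.image_mono ?_) (hβ x.1 x.2).1
      intro j hj; exact hsub j hj
    exact (hβ x'.1 x'.2).2 _ hmem
  -- closedness of {‖b‖ ≤ ‖β x‖}
  have hclosed : IsClosed {x : X | ‖b‖ ≤ ‖β x.1‖} := by
    rw [← isOpen_compl_iff]
    rw [isOpen_iff_forall_mem_open]
    intro x hx
    refine ⟨{x' : X | ∀ j, x.1 j ≠ 0 → x'.1 j ≠ 0}, ?_, supp_open n x.1, fun j h => h⟩
    intro x' hx'
    simp only [Set.mem_compl_iff, Set.mem_setOf_eq, not_le] at hx ⊢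
    exact lt_of_le_of_lt (key x x' hx') hx
  -- the open set
  set U : Set X := ⋃ x₀ ∈ {x : X | β x.1 = b},
      {x : X | ∀ j, x₀.1 j ≠ 0 → x.1 j ≠ 0} with hU
  have hUopen : IsOpen U := isOpen_biUnion fun x₀ _ => supp_open n x₀.1
  have hEq : {x : X | β x.1 = b} = U ∩ {x : X | ‖b‖ ≤ ‖β x.1‖} := by
    ext x
    constructor
    · intro hx
      refine ⟨Set.mem_biUnion hx fun j h => h, ?_⟩
      simp only [Set.mem_setOf_eq] at hx ⊢
      rw [hx]
    · rintro ⟨hxU, hxC⟩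
      simp only [hU, Set.mem_iUnion] at hxU
      obtain ⟨x₀, hx₀, hsub⟩ := hxU
      simp only [Set.mem_setOf_eq] at hx₀ hxC ⊢
      -- b = β x₀ lies in the hull for x, and ‖β x‖ ≥ ‖b‖, β x minimal ⇒ equality
      have hbmem : b ∈ convexHull ℝ (α '' {j | x.1 j ≠ 0}) := by
        rw [← hx₀]
        refine convexHull_mono (Set.image_mono ?_) (hβ x₀.1 x₀.2).1
        intro j hj; exact hsub j hj
      have hmin : ∀ y ∈ convexHull ℝ (α '' {j | x.1 j ≠ 0}), ‖b‖ ≤ ‖y‖ := by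
        intro y hy
        exact le_trans hxC ((hβ x.1 x.2).2 y hy)
      exact min_norm_unique (convex_convexHull ℝ _) (hβ x.1 x.2).1 hbmem
        (hβ x.1 x.2).2 hmin
  exact ⟨⟨U, _, hUopen, hclosed, hEq⟩, hclosed, U, hUopen, hEq⟩
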